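/- Let M be a right R-module. The following are equivalent: (1) M is an SSP module; (2) for every split monomorphism f: A → M where A is a direct summand of M, the submodule A + Im(f) is a direct summand of M; (3) for every split epimorphism f: M → M/A where A is a direct summand of M, the submodule A + Ker(f) is a direct summand of M. -/

import Mathlib

universe u v w

section Defs

variable {S : Type u} [Ring S]

/-- A submodule `A` is a direct summand of `M`. -/
def IsDirectSummand {M : Type v} [AddCommGroup M] [Module S M] (A : Submodule S M) : Prop :=
  ∃ B : Submodule S M, A ⊓ B = ⊥ ∧ A ⊔ B = ⊤

/-- `A` is an essential submodule of `B`. -/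
def IsEssentialIn {M : Type v} [AddCommGroup M] [Module S M] (A B : Submodule S M) : Prop :=
  A ≤ B ∧ ∀ K : Submodule S M, K ≤ B → K ≠ ⊥ → A ⊓ K ≠ ⊥

/-- `A` is essential in some direct summand of `M`. -/
def EssentialInSummand {M : Type v} [AddCommGroup M] [Module S M] (A : Submodule S M) : Prop :=
  ∃ D : Submodule S M, IsDirectSummand D ∧ IsEssentialIn A D

/-- `A` is a small (superfluous) submodule of `M`. -/
def IsSmallSubmodule {M : Type v} [AddCommGroup M] [Module S M] (A : Submodule S M) : Prop :=
  ∀ K : Submodule S M, A ⊔ K = ⊤ → K = ⊤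

/-- `A` lies above the direct summand `D` of `M`, i.e. `D ≤ A` and `A/D` is small in `M/D`. -/
def LiesAbove {M : Type v} [AddCommGroup M] [Module S M] (A D : Submodule S M) : Prop :=
  IsDirectSummand D ∧ D ≤ A ∧ IsSmallSubmodule (Submodule.map D.mkQ A)

/-- `A` lies above some direct summand of `M`. -/
def LiesAboveSummand {M : Type v} [AddCommGroup M] [Module S M] (A : Submodule S M) : Prop :=
  ∃ D : Submodule S M, LiesAbove A D

end Defs

section ModDefs

variable (S : Type u) [Ring S]

/-- SSP: the sum of any two direct summands is a direct summand. -/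
def HasSSP (M : Type v) [AddCommGroup M] [Module S M] : Prop :=
  ∀ A B : Submodule S M, IsDirectSummand A → IsDirectSummand B → IsDirectSummand (A ⊔ B)

/-- SIP: the intersection of any two direct summands is a direct summand. -/
def HasSIP (M : Type v) [AddCommGroup M] [Module S M] : Prop :=
  ∀ A B : Submodule S M, IsDirectSummand A → IsDirectSummand B → IsDirectSummand (A ⊓ B)

/-- SIP-CS: the intersection of any finite family of direct summands is essential in a
direct summand. -/
def IsSIPCS (M : Type v) [AddCommGroup M] [Module S M] : Prop :=
  ∀ (ι : Type) [Fintype ι] (A : ι → Submodule S M),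
    (∀ i, IsDirectSummand (A i)) → EssentialInSummand (⨅ i, A i)

/-- SSP-lifting: if each member of a finite family of submodules lies above a direct summand,
then their sum lies above a direct summand. -/
def IsSSPLifting (M : Type v) [AddCommGroup M] [Module S M] : Prop :=
  ∀ (ι : Type) [Fintype ι] (A : ι → Submodule S M),
    (∀ i, LiesAboveSummand (A i)) → LiesAboveSummand (⨆ i, A i)

/-- C2 condition: every submodule isomorphic to a direct summand is a direct summand. -/
def HasC2 (M : Type v) [AddCommGroup M] [Module S M] : Prop :=
  ∀ A B : Submodule S M, IsDirectSummand B → Nonempty (A ≃ₗ[S] B) → IsDirectSummand A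

/-- C3 condition: the sum of two direct summands with zero intersection is a direct summand. -/
def HasC3 (M : Type v) [AddCommGroup M] [Module S M] : Prop :=
  ∀ A B : Submodule S M, IsDirectSummand A → IsDirectSummand B → A ⊓ B = ⊥ →
    IsDirectSummand (A ⊔ B)

/-- D2 condition: if `M/A` is isomorphic to a direct summand of `M` then `A` is a direct
summand. -/
def HasD2 (M : Type v) [AddCommGroup M] [Module S M] : Prop :=
  ∀ A : Submodule S M, (∃ B : Submodule S M, IsDirectSummand B ∧
    Nonempty ((M ⧸ A) ≃ₗ[S] B)) → IsDirectSummand A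

/-- D3 condition: if two direct summands sum to `M`, their intersection is a direct summand. -/
def IsD3Module (M : Type v) [AddCommGroup M] [Module S M] : Prop :=
  ∀ A B : Submodule S M, IsDirectSummand A → IsDirectSummand B → A ⊔ B = ⊤ →
    IsDirectSummand (A ⊓ B)

/-- `M` is relatively CS-Rickart to `N`. -/
def RelCSRickart (M : Type v) (N : Type w) [AddCommGroup M] [Module S M]
    [AddCommGroup N] [Module S N] : Prop :=
  ∀ φ : M →ₗ[S] N, EssentialInSummand (LinearMap.ker φ)

/-- `M` is relatively d-CS-Rickart to `N`. -/
def RelDCSRickart (M : Type v) (N : Type w) [AddCommGroup M] [Module S M]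
    [AddCommGroup N] [Module S N] : Prop :=
  ∀ φ : N →ₗ[S] M, LiesAboveSummand (LinearMap.range φ)

/-- CS-Rickart module. -/
def IsCSRickart (M : Type v) [AddCommGroup M] [Module S M] : Prop :=
  RelCSRickart S M M

/-- d-CS-Rickart module. -/
def IsDCSRickart (M : Type v) [AddCommGroup M] [Module S M] : Prop :=
  RelDCSRickart S M M

/-- `M` has an `Ω`-cover, where `Ω` is the class of modules satisfying `P`. -/
def HasCover (P : ModuleCat.{v} S → Prop) (M : Type v) [AddCommGroup M] [Module S M] : Prop :=
  ∃ (E : ModuleCat.{v} S) (g : E →ₗ[S] M), P E ∧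
    (∀ (E' : ModuleCat.{v} S), P E' → ∀ g' : E' →ₗ[S] M,
      ∃ h : E' →ₗ[S] E, g ∘ₗ h = g') ∧
    (∀ h : E →ₗ[S] E, g ∘ₗ h = g → Function.Bijective h)

/-- `M` has an `Ω`-envelope, where `Ω` is the class of modules satisfying `P`. -/
def HasEnvelope (P : ModuleCat.{v} S → Prop) (M : Type v) [AddCommGroup M] [Module S M] : Prop :=
  ∃ (E : ModuleCat.{v} S) (g : M →ₗ[S] E), P E ∧
    (∀ (E' : ModuleCat.{v} S), P E' → ∀ g' : M →ₗ[S] E',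
      ∃ h : E →ₗ[S] E', h ∘ₗ g = g') ∧
    (∀ h : E →ₗ[S] E, h ∘ₗ g = g → Function.Bijective h)

/-- `M` is 2-generated. -/
def TwoGenerated (M : Type v) [AddCommGroup M] [Module S M] : Prop :=
  ∃ a b : M, Submodule.span S ({a, b} : Set M) = ⊤

/-- `M` is finitely cogenerated. -/
def FinitelyCogenerated (M : Type v) [AddCommGroup M] [Module S M] : Prop :=
  ∀ 𝒜 : Set (Submodule S M), sInf 𝒜 = ⊥ →
    ∃ ℬ ⊆ 𝒜, ℬ.Finite ∧ sInf ℬ = ⊥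

/-- The socle of `M`: the sum of all simple submodules. -/
def SocleOf (M : Type v) [AddCommGroup M] [Module S M] : Submodule S M :=
  sSup {A : Submodule S M | IsSimpleModule S ↥A}

/-- An indecomposable module: nonzero, and its only direct summands are `0` and itself. -/
def IsIndecomposable (M : Type v) [AddCommGroup M] [Module S M] : Prop :=
  (⊤ : Submodule S M) ≠ ⊥ ∧
    ∀ A : Submodule S M, IsDirectSummand A → A = ⊥ ∨ A = ⊤

end ModDefs

section RingDefs

variable (R : Type u) [Ring R]

/-- The right annihilator of an element of a right `R`-module, as a right ideal of `R`. -/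
def rightAnnihilator {M : Type v} [AddCommGroup M] [Module Rᵐᵒᵖ M] (m : M) :
    Submodule Rᵐᵒᵖ R where
  carrier := {r : R | MulOpposite.op r • m = 0}
  add_mem' := by
    intro a b ha hb
    simp only [Set.mem_setOf_eq] at *
    rw [MulOpposite.op_add, add_smul, ha, hb, add_zero]
  zero_mem' := by simp
  smul_mem' := by
    intro c x hx
    simp only [Set.mem_setOf_eq] at *
    have : MulOpposite.op (c • x) = c * MulOpposite.op x := by
      rw [MulOpposite.smul_eq_mul_unop]
      simp [MulOpposite.op_mul]
    rw [this, mul_smul, hx, smul_zero]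

/-- `M` is a nonsingular right `R`-module. -/
def IsNonsingular (M : Type v) [AddCommGroup M] [Module Rᵐᵒᵖ M] : Prop :=
  ∀ m : M, IsEssentialIn (rightAnnihilator R m) (⊤ : Submodule Rᵐᵒᵖ R) → m = 0

/-- `R` is a right V-ring: every simple right `R`-module is injective. -/
def IsRightVRing : Prop :=
  ∀ (N : Type u) [AddCommGroup N] [Module Rᵐᵒᵖ N],
    IsSimpleModule Rᵐᵒᵖ N → Module.Injective Rᵐᵒᵖ N

/-- `R` is semiregular: `R/J(R)` is von Neumann regular and idempotents lift modulo `J(R)`. -/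
def IsSemiregularRing : Prop :=
  (∀ a : R, ∃ b : R, a - a * b * a ∈ Ideal.jacobson (⊥ : Ideal R) ∧ b = b * a * b) ∧
  (∀ a : R, a * a - a ∈ Ideal.jacobson (⊥ : Ideal R) →
    ∃ e : R, e * e = e ∧ e - a ∈ Ideal.jacobson (⊥ : Ideal R))

end RingDefs

namespace SSPAux

variable {S : Type*} [Ring S] {M : Type*} [AddCommGroup M] [Module S M]

/-- The range of an idempotent endomorphism is a direct summand. -/
lemma summand_of_idem (e : M →ₗ[S] M) (he : ∀ m, e (e m) = e m) :
    IsDirectSummand (LinearMap.range e) := by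
  refine ⟨LinearMap.ker e, ?_, ?_⟩
  · rw [eq_bot_iff]
    intro x hx
    obtain ⟨⟨m, rfl⟩, h2⟩ := Submodule.mem_inf.mp hx
    have h3 : e (e m) = 0 := LinearMap.mem_ker.mp h2
    rw [Submodule.mem_bot, ← he m]
    exact h3
  · rw [eq_top_iff]
    intro m _
    refine Submodule.mem_sup.mpr ⟨e m, ⟨m, rfl⟩, m - e m, ?_, by abel⟩
    simp [LinearMap.mem_ker, he m]

/-- The kernel of an idempotent endomorphism is a direct summand. -/
lemma ker_summand_of_idem (e : M →ₗ[S] M) (he : ∀ m, e (e m) = e m) :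
    IsDirectSummand (LinearMap.ker e) := by
  refine ⟨LinearMap.range e, ?_, ?_⟩
  · rw [eq_bot_iff]
    intro x hx
    obtain ⟨h2, ⟨m, rfl⟩⟩ := Submodule.mem_inf.mp hx
    have h3 : e (e m) = 0 := LinearMap.mem_ker.mp h2
    rw [Submodule.mem_bot, ← he m]
    exact h3
  · rw [eq_top_iff]
    intro m _
    refine Submodule.mem_sup.mpr ⟨m - e m, ?_, e m, ⟨m, rfl⟩, by abel⟩
    simp [LinearMap.mem_ker, he m]

/-- A direct summand admits an idempotent projection onto it. -/
lemma exists_idem (A : Submodule S M) (hA : IsDirectSummand A) :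
    ∃ e : M →ₗ[S] M, (∀ m, e m ∈ A) ∧ (∀ a ∈ A, e a = a) := by
  obtain ⟨B, hinf, hsup⟩ := hA
  have hc : IsCompl A B := ⟨disjoint_iff.mpr hinf, codisjoint_iff.mpr hsup⟩
  refine ⟨A.subtype ∘ₗ Submodule.projectionOnto A B hc,
    fun m => (Submodule.projectionOnto A B hc m).2, fun a ha => ?_⟩
  have := Submodule.linearProjOfIsCompl_apply_left hc ⟨a, ha⟩
  simp [this]

/-- If an endomorphism fixes `A ⊔ B` pointwise and lands in `A ⊔ B`, then `A ⊔ B`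
is a direct summand. -/
lemma summand_of_fix (A B : Submodule S M) (h : M →ₗ[S] M)
    (hfix : ∀ x ∈ A ⊔ B, h x = x) (hmem : ∀ m, h m ∈ A ⊔ B) :
    IsDirectSummand (A ⊔ B) := by
  have hr : LinearMap.range h = A ⊔ B := by
    apply le_antisymm
    · rintro x ⟨m, rfl⟩; exact hmem m
    · intro x hx; exact ⟨x, hfix x hx⟩
  rw [← hr]
  exact summand_of_idem h (fun m => hfix _ (hmem m))

/-- Key step: if `B ⊔ e(B)` is a direct summand, where `e` is an idempotent projection
onto `A`, then `A ⊔ B` is a direct summand. -/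
lemma step2 (A B : Submodule S M)
    (e : M →ₗ[S] M) (heA : ∀ m, e m ∈ A) (hefix : ∀ a ∈ A, e a = a)
    (hS : IsDirectSummand (B ⊔ Submodule.map e B)) :
    IsDirectSummand (A ⊔ B) := by
  obtain ⟨s, hsS, hsfix⟩ := exists_idem _ hS
  set h : M →ₗ[S] M := s + e - s ∘ₗ e with hdef
  have happ : ∀ m, h m = s m + e m - s (e m) := fun m => by simp [hdef]
  have hSle : B ⊔ Submodule.map e B ≤ A ⊔ B := by
    refine sup_le le_sup_right ?_
    rintro x ⟨b, hb, rfl⟩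
    exact Submodule.mem_sup_left (heA b)
  have hA' : ∀ a ∈ A, h a = a := by
    intro a ha
    rw [happ, hefix a ha]
    abel
  have hB' : ∀ b ∈ B, h b = b := by
    intro b hb
    have h1 : s b = b := hsfix b (Submodule.mem_sup_left hb)
    have h2 : s (e b) = e b :=
      hsfix _ (Submodule.mem_sup_right (Submodule.mem_map_of_mem hb))
    rw [happ, h1, h2]
    abel
  refine summand_of_fix A B h ?_ ?_
  · intro x hx
    have hker : A ⊔ B ≤ LinearMap.ker (h - LinearMap.id) := by
      refine sup_le ?_ ?_
      · intro a ha; simp [LinearMap.mem_ker, hA' a ha]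
      · intro b hb; simp [LinearMap.mem_ker, hB' b hb]
    have := hker hx
    simp only [LinearMap.mem_ker, LinearMap.sub_apply, LinearMap.id_apply,
      sub_eq_zero] at this
    exact this
  · intro m
    rw [happ]
    exact Submodule.sub_mem _
      (Submodule.add_mem _ (hSle (hsS m)) (Submodule.mem_sup_left (heA m)))
      (hSle (hsS (e m)))

end SSPAux

namespace SSPAux

variable {S : Type*} [Ring S] {M : Type*} [AddCommGroup M] [Module S M]

/-- Under condition (2), `B ⊔ e(B)` is a direct summand for any summand `B` and
any endomorphism `e`. -/
lemma S_summand_of_cond2 (B : Submodule S M) (hB : IsDirectSummand B) (e : M →ₗ[S] M)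
    (H2 : ∀ A : Submodule S M, IsDirectSummand A →
      ∀ f : A →ₗ[S] M, (∃ g : M →ₗ[S] A, g ∘ₗ f = LinearMap.id) →
        IsDirectSummand (A ⊔ LinearMap.range f)) :
    IsDirectSummand (B ⊔ Submodule.map e B) := by
  obtain ⟨B', hinf, hsup⟩ := hB
  have hc : IsCompl B B' := ⟨disjoint_iff.mpr hinf, codisjoint_iff.mpr hsup⟩
  set pr : M →ₗ[S] B := Submodule.linearProjOfIsCompl B B' hc with hprdef
  set p : M →ₗ[S] M := B.subtype ∘ₗ pr with hpdef
  have hpr_left : ∀ x : B, pr (x : M) = x := fun x =>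
    Submodule.linearProjOfIsCompl_apply_left hc x
  have hprp : ∀ m, pr (p m) = pr m := by
    intro m
    simp only [hpdef, LinearMap.comp_apply, Submodule.coe_subtype]
    exact hpr_left (pr m)
  set θ : B →ₗ[S] M := B.subtype + (LinearMap.id - p) ∘ₗ e ∘ₗ B.subtype with hθdef
  have hθapp : ∀ x : B, θ x = (x : M) + (e x - p (e x)) := fun x => by
    simp [hθdef]
  have hsplit : pr ∘ₗ θ = LinearMap.id := by
    ext x
    have h1 : pr (θ x) = pr x + (pr (e x) - pr (p (e x))) := by
      rw [hθapp, map_add, map_sub]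
    have key : pr (θ x) = x := by
      rw [h1, hprp, hpr_left x]; abel
    simp [LinearMap.comp_apply, key]
  have hsummand := H2 B ⟨B', hinf, hsup⟩ θ ⟨pr, hsplit⟩
  have heq : B ⊔ LinearMap.range θ = B ⊔ Submodule.map e B := by
    apply le_antisymm
    · refine sup_le le_sup_left ?_
      rintro x ⟨b, rfl⟩
      rw [hθapp]
      refine Submodule.add_mem _ (Submodule.mem_sup_left b.2) (Submodule.sub_mem _ ?_ ?_)
      · exact Submodule.mem_sup_right (Submodule.mem_map_of_mem b.2)
      · exact Submodule.mem_sup_left (pr (e b)).2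
    · refine sup_le le_sup_left ?_
      rintro x ⟨b, hb, rfl⟩
      have : e b = (θ ⟨b, hb⟩ - b) + p (e b) := by rw [hθapp]; abel
      rw [this]
      refine Submodule.add_mem _ (Submodule.sub_mem _ ?_ ?_) ?_
      · exact Submodule.mem_sup_right ⟨⟨b, hb⟩, rfl⟩
      · exact Submodule.mem_sup_left hb
      · exact Submodule.mem_sup_left (pr (e b)).2
  rwa [heq] at hsummand

/-- Under condition (3), `B ⊔ e(B)` is a direct summand for any summand `B` and
any endomorphism `e`. -/
lemma S_summand_of_cond3 (B : Submodule S M) (hB : IsDirectSummand B) (e : M →ₗ[S] M)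
    (H3 : ∀ A : Submodule S M, IsDirectSummand A →
      ∀ f : M →ₗ[S] M ⧸ A, (∃ g : M ⧸ A →ₗ[S] M, f ∘ₗ g = LinearMap.id) →
        IsDirectSummand (A ⊔ LinearMap.ker f)) :
    IsDirectSummand (B ⊔ Submodule.map e B) := by
  obtain ⟨p, hpB, hpfix⟩ := exists_idem B hB
  have hpp : ∀ m, p (p m) = p m := fun m => hpfix _ (hpB m)
  set n : M →ₗ[S] M := (LinearMap.id - p) ∘ₗ e ∘ₗ p with hndef
  have hnapp : ∀ m, n m = e (p m) - p (e (p m)) := fun m => by simp [hndef]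
  have hpn : ∀ m, p (n m) = 0 := by
    intro m
    rw [hnapp, map_sub, hpp]
    abel
  have hnn : ∀ m, n (n m) = 0 := by
    intro m
    rw [hnapp (n m), hpn, map_zero, map_zero, sub_zero]
  set f : M →ₗ[S] M ⧸ B := B.mkQ ∘ₗ (LinearMap.id - n) with hfdef
  have hfapp : ∀ m, f m = B.mkQ (m - n m) := fun m => by simp [hfdef]
  have hkerB : B ≤ LinearMap.ker (LinearMap.id - p : M →ₗ[S] M) := by
    intro b hb
    simp [LinearMap.mem_ker, hpfix b hb]
  set g0 : M ⧸ B →ₗ[S] M := B.liftQ (LinearMap.id - p) hkerB with hg0def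
  set g : M ⧸ B →ₗ[S] M := (LinearMap.id + n) ∘ₗ g0 with hgdef
  have hsplit : f ∘ₗ g = LinearMap.id := by
    apply Submodule.linearMap_qext
    ext m
    have hg0 : g0 (B.mkQ m) = m - p m := by
      rw [hg0def, Submodule.mkQ_apply, Submodule.liftQ_apply]
      simp
    have : g (B.mkQ m) = (m - p m) + n (m - p m) := by
      rw [hgdef, LinearMap.comp_apply, hg0]
      simp
    simp only [LinearMap.comp_apply, LinearMap.id_apply]
    rw [this, hfapp]
    have h2 : (m - p m) + n (m - p m) - n ((m - p m) + n (m - p m))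
        = (m - p m) := by
      rw [map_add, hnn]
      abel
    rw [h2, map_sub]
    have : B.mkQ (p m) = 0 := by
      rw [Submodule.mkQ_apply, Submodule.Quotient.mk_eq_zero]
      exact hpB m
    rw [this, sub_zero]
  have hsummand := H3 B hB f ⟨g, hsplit⟩
  have heq : B ⊔ LinearMap.ker f = B ⊔ Submodule.map e B := by
    apply le_antisymm
    · refine sup_le le_sup_left ?_
      intro m hm
      have hm' : m - n m ∈ B := by
        have := LinearMap.mem_ker.mp hm
        rw [hfapp, Submodule.mkQ_apply, Submodule.Quotient.mk_eq_zero] at this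
        exact this
      have : m = (m - n m) + (e (p m) - p (e (p m))) := by rw [← hnapp]; abel
      rw [this]
      refine Submodule.add_mem _ (Submodule.mem_sup_left hm') (Submodule.sub_mem _ ?_ ?_)
      · exact Submodule.mem_sup_right (Submodule.mem_map_of_mem (hpB m))
      · exact Submodule.mem_sup_left (hpB _)
    · refine sup_le le_sup_left ?_
      rintro x ⟨b, hb, rfl⟩
      have hker : b + n b ∈ LinearMap.ker f := by
        rw [LinearMap.mem_ker, hfapp, map_add, hnn]
        have : b + n b - (n b + 0) = b := by abel
        rw [this, Submodule.mkQ_apply, Submodule.Quotient.mk_eq_zero]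
        exact hb
      have hpb : p b = b := hpfix b hb
      have : e b = (b + n b) + (p (e b) - b) := by
        rw [hnapp, hpb]; abel
      rw [this]
      refine Submodule.add_mem _ (Submodule.mem_sup_right hker)
        (Submodule.mem_sup_left (Submodule.sub_mem _ (hpB _) hb))
  rwa [heq] at hsummand

/-- Splitting monos have direct-summand ranges. -/
lemma range_summand_of_split {A : Submodule S M} (f : A →ₗ[S] M) (g : M →ₗ[S] A)
    (hgf : g ∘ₗ f = LinearMap.id) : IsDirectSummand (LinearMap.range f) := by
  have hgf' : ∀ x : A, g (f x) = x := fun x => by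
    simpa using LinearMap.ext_iff.mp hgf x
  set E : M →ₗ[S] M := f ∘ₗ g with hEdef
  have hEapp : ∀ m, E m = f (g m) := fun m => by simp [hEdef]
  have hrange : LinearMap.range E = LinearMap.range f := by
    apply le_antisymm
    · rintro x ⟨m, rfl⟩
      exact ⟨g m, (hEapp m).symm⟩
    · rintro x ⟨a, rfl⟩
      exact ⟨f a, by rw [hEapp, hgf' a]⟩
  have hidem : ∀ m, E (E m) = E m := by
    intro m
    rw [hEapp, hEapp m, hgf' (g m)]
  rw [← hrange]
  exact summand_of_idem E hidem

/-- Splitting epis have direct-summand kernels. -/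
lemma ker_summand_of_split {N : Type*} [AddCommGroup N] [Module S N]
    (f : M →ₗ[S] N) (g : N →ₗ[S] M)
    (hfg : f ∘ₗ g = LinearMap.id) : IsDirectSummand (LinearMap.ker f) := by
  have hfg' : ∀ x : N, f (g x) = x := fun x => by
    simpa using LinearMap.ext_iff.mp hfg x
  set E : M →ₗ[S] M := g ∘ₗ f with hEdef
  have hEapp : ∀ m, E m = g (f m) := fun m => by simp [hEdef]
  have hker : LinearMap.ker E = LinearMap.ker f := by
    apply le_antisymm
    · intro m hm
      have h1 : E m = 0 := LinearMap.mem_ker.mp hm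
      have h2 : f (E m) = f m := by rw [hEapp, hfg']
      rw [LinearMap.mem_ker, ← h2, h1, map_zero]
    · intro m hm
      have h1 : f m = 0 := LinearMap.mem_ker.mp hm
      rw [LinearMap.mem_ker, hEapp, h1, map_zero]
  have hidem : ∀ m, E (E m) = E m := by
    intro m
    rw [hEapp (E m), hEapp m, hfg' (f m)]
  rw [← hker]
  exact ker_summand_of_idem E hidem

end SSPAux


/-- characterizations of SSP modules via split monomorphisms and
split epimorphisms, for a right `R`-module `M` (realized as a left `Rᵐᵒᵖ`-module). -/
theorem statement_0 (R : Type u) [Ring R] (M : Type v) [AddCommGroup M] [Module Rᵐᵒᵖ M] :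
    List.TFAE [
      HasSSP Rᵐᵒᵖ M,
      ∀ A : Submodule Rᵐᵒᵖ M, IsDirectSummand A →
        ∀ f : A →ₗ[Rᵐᵒᵖ] M, (∃ g : M →ₗ[Rᵐᵒᵖ] A, g ∘ₗ f = LinearMap.id) →
          IsDirectSummand (A ⊔ LinearMap.range f),
      ∀ A : Submodule Rᵐᵒᵖ M, IsDirectSummand A →
        ∀ f : M →ₗ[Rᵐᵒᵖ] M ⧸ A, (∃ g : M ⧸ A →ₗ[Rᵐᵒᵖ] M, f ∘ₗ g = LinearMap.id) →
          IsDirectSummand (A ⊔ LinearMap.ker f)] := by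
  tfae_have 1 → 2 := by
    rintro h1 A hA f ⟨g, hgf⟩
    exact h1 A _ hA (SSPAux.range_summand_of_split f g hgf)
  tfae_have 2 → 1 := by
    intro h2 A B hA hB
    obtain ⟨e, heA, hefix⟩ := SSPAux.exists_idem A hA
    exact SSPAux.step2 A B e heA hefix (SSPAux.S_summand_of_cond2 B hB e h2)
  tfae_have 1 → 3 := by
    rintro h1 A hA f ⟨g, hfg⟩
    exact h1 A _ hA (SSPAux.ker_summand_of_split f g hfg)
  tfae_have 3 → 1 := by
    intro h3 A B hA hB
    obtain ⟨e, heA, hefix⟩ := SSPAux.exists_idem A hA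
    exact SSPAux.step2 A B e heA hefix (SSPAux.S_summand_of_cond3 B hB e h3)
  tfae_finish
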